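/- Let q be an odd prime power, d a non-square in F_q*, α in F_{q^2} with α² = d, Q = {γ in F_{q^2} : γ^{q+1} = 1}, and Q₀ = {γ² : γ in Q}. If q ≡ 1 (mod 4), then ψ(α·Q₀) = {α} ∪ {c in F_q : c − α is a square in F_{q^2}}, the maximal clique of size (q+1)/2 from the (F_q, α)-construction. If q ≡ 3 (mod 4), then ψ(α·Q₀ ∪ {0}) = {α, −α} ∪ {c in F_q : c − α is a square in F_{q^2}}, the maximal clique of size (q+3)/2 from the (F_q, α)-construction. -/

import Mathlib

private lemma aux_sqrt {F : Type*} [Field F] [Fintype F] (s : ℕ)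
    (hcard : Fintype.card F = (2*s+1)^2) {γ : F} (hγm : γ ^ (s+1) = 1) :
    ∃ δ : F, δ ^ (2*s+1+1) = 1 ∧ δ ^ 2 = γ := by
  classical
  have hγ0 : γ ≠ 0 := by rintro rfl; rw [zero_pow (by omega)] at hγm; exact zero_ne_one hγm
  obtain ⟨g, hg⟩ := IsCyclic.exists_generator (α := Fˣ)
  obtain ⟨n, hn⟩ : Units.mk0 γ hγ0 ∈ Submonoid.powers g := by
    rw [mem_powers_iff_mem_zpowers]; exact hg _
  dsimp only at hn
  have horder : orderOf g = 4*s*(s+1) := by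
    rw [orderOf_eq_card_of_forall_mem_zpowers hg, Nat.card_eq_fintype_card,
      Fintype.card_units, hcard]
    have : (2*s+1)^2 = 4*s*(s+1)+1 := by ring
    omega
  have hpow : g ^ (n * (s+1)) = 1 := by
    rw [pow_mul, hn]
    ext
    push_cast
    exact hγm
  have hdvd : 4*s*(s+1) ∣ n * (s+1) := horder ▸ orderOf_dvd_of_pow_eq_one hpow
  have hdvd2 : 4*s ∣ n := Nat.dvd_of_mul_dvd_mul_right (Nat.succ_pos s) hdvd
  obtain ⟨t, rfl⟩ := hdvd2
  refine ⟨((g : Fˣ) : F) ^ (2*s*t), ?_, ?_⟩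
  · have h1 : (g ^ (2*s*t*(2*s+1+1)) : Fˣ) = 1 := by
      rw [show 2*s*t*(2*s+1+1) = (4*s*(s+1))*t by ring, pow_mul, ← horder,
        pow_orderOf_eq_one, one_pow]
    rw [← pow_mul, ← Units.val_pow_eq_pow_val, h1, Units.val_one]
  · have h2 : (g ^ (2*s*t*2) : Fˣ) = Units.mk0 γ hγ0 := by
      rw [show 2*s*t*2 = 4*s*t by ring, hn]
    have h3 := congrArg (Units.val) h2
    rw [Units.val_pow_eq_pow_val] at h3
    rw [← pow_mul]
    simpa using h3

private lemma aux_mem {F : Type*} [Field F] [Fintype F] (q : ℕ) (hq2 : 2 ≤ q)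
    (K : Subfield F) (hK : Nat.card K = q) : ∀ x : F, x ∈ K ↔ x ^ q = x := by
  classical
  haveI : Fintype K := Fintype.ofFinite K
  have hcardK : Fintype.card K = q := by rw [← Nat.card_eq_fintype_card]; exact hK
  have hfwd : ∀ x : F, x ∈ K → x ^ q = x := by
    intro x hx
    have h1 : (⟨x, hx⟩ : K) ^ q = ⟨x, hx⟩ := by
      rw [← hcardK]; exact FiniteField.pow_card _
    have h2 := congrArg (fun y : K => (y : F)) h1
    push_cast at h2
    exact h2
  intro x
  refine ⟨hfwd x, fun hx => ?_⟩
  set f : Polynomial F := Polynomial.X ^ q - Polynomial.X with hf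
  have hf0 : f ≠ 0 := by
    intro h
    have h2 := congrArg (fun g => Polynomial.coeff g q) h
    simp only [hf, Polynomial.coeff_sub, Polynomial.coeff_X_pow, if_pos rfl,
      Polynomial.coeff_X, if_neg (by omega : ¬ (1:ℕ) = q), Polynomial.coeff_zero] at h2
    norm_num at h2
  have hdeg : f.natDegree ≤ q := le_trans (Polynomial.natDegree_sub_le _ _) (by simp; omega)
  have hroots : ∀ y : F, y ^ q = y → y ∈ f.roots.toFinset := by
    intro y hy
    rw [Multiset.mem_toFinset, Polynomial.mem_roots hf0]
    simp [Polynomial.IsRoot, hf, sub_eq_zero, hy]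
  have hcard1 : ({y : F | y ^ q = y} : Set F).ncard ≤ q := by
    have hsub2 : {y : F | y ^ q = y} ⊆ (f.roots.toFinset : Set F) := fun y hy => hroots y hy
    calc ({y : F | y ^ q = y} : Set F).ncard ≤ (f.roots.toFinset : Set F).ncard :=
          Set.ncard_le_ncard hsub2 (Set.toFinite _)
      _ = f.roots.toFinset.card := Set.ncard_coe_finset _
      _ ≤ Multiset.card f.roots := Multiset.toFinset_card_le _
      _ ≤ f.natDegree := Polynomial.card_roots' f
      _ ≤ q := hdeg
  have hKcard : (K : Set F).ncard = q := by
    rw [← Nat.card_coe_set_eq]; simpa using hK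
  have hEq : (K : Set F) = {y : F | y ^ q = y} :=
    Set.eq_of_subset_of_ncard_le (fun y hy => hfwd y hy) (by rw [hKcard]; exact hcard1)
      (Set.toFinite _)
  show x ∈ (K : Set F)
  rw [hEq]; exact hx

/-- ψ carries the αQ-construction onto the (F_q, α)-construction.
If q ≡ 1 (mod 4), then ψ(α·Q₀) = {α} ∪ {c ∈ F_q : c − α a square};
if q ≡ 3 (mod 4), then ψ(α·Q₀ ∪ {0}) = {α, −α} ∪ {c ∈ F_q : c − α a square}. -/
theorem stmt_18 (q : ℕ) (hq : Odd q) (hq' : IsPrimePow q)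
    (F : Type*) [Field F] (hF : Nat.card F = q ^ 2)
    (K : Subfield F) (hK : Nat.card K = q)
    (d : F) (hdK : d ∈ K) (hd0 : d ≠ 0) (hdns : ¬ ∃ c ∈ K, c * c = d)
    (α : F) (hα : α ^ 2 = d)
    (ψ : F → F) (hψ : ∀ γ : F, γ ≠ α → ψ γ = (α * γ + d) / (γ - α)) (hψα : ψ α = α)
    (Q Q₀ : Set F) (hQ : Q = {γ : F | γ ^ (q + 1) = 1})
    (hQ₀ : Q₀ = (fun γ => γ ^ 2) '' Q) :
    (q % 4 = 1 →
      ψ '' ((fun x => α * x) '' Q₀) = {α} ∪ {x : F | x ∈ K ∧ IsSquare (x - α)}) ∧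
    (q % 4 = 3 →
      ψ '' (((fun x => α * x) '' Q₀) ∪ {0})
        = {α, -α} ∪ {x : F | x ∈ K ∧ IsSquare (x - α)}) := by
  classical
  have hq2 : 2 ≤ q := hq'.two_le
  obtain ⟨s, rfl⟩ := hq
  have hs1 : 1 ≤ s := by omega
  have hFfin : Finite F := Nat.finite_of_card_ne_zero (by rw [hF]; positivity)
  haveI : Fintype F := Fintype.ofFinite F
  have hcard : Fintype.card F = (2*s+1)^2 := by rw [← Nat.card_eq_fintype_card, hF]
  haveI : Fintype K := Fintype.ofFinite K
  have hcardK : Fintype.card K = 2*s+1 := by rw [← Nat.card_eq_fintype_card, hK]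
  have hKiff := aux_mem (2*s+1) (by omega) K hK
  -- characteristic
  obtain ⟨p, e, hpp0, hep, hpe⟩ := hq'
  have hppn : p.Prime := Nat.prime_iff.mpr hpp0
  haveI := ringChar.charP F
  obtain ⟨n, hrp, hcardr⟩ := FiniteField.card F (ringChar F)
  have hrP : ringChar F = p := by
    have h1 : ringChar F ∣ p ^ (e*2) := by
      have h2 : p ^ (e*2) = Fintype.card F := by rw [hcard, ← hpe, ← pow_mul]
      rw [h2, hcardr]
      exact dvd_pow_self _ n.pos.ne'
    exact (Nat.prime_dvd_prime_iff_eq hrp hppn).mp (hrp.dvd_of_dvd_pow h1)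
  haveI : CharP F p := hrP ▸ ringChar.charP F
  haveI : Fact p.Prime := ⟨hppn⟩
  have frobsub : ∀ x y : F, (x - y) ^ (2*s+1) = x ^ (2*s+1) - y ^ (2*s+1) := by
    intro x y; rw [← hpe]; exact sub_pow_char_pow x y e
  have frobadd : ∀ x y : F, (x + y) ^ (2*s+1) = x ^ (2*s+1) + y ^ (2*s+1) := by
    intro x y
    have h1 := frobsub x (-y)
    rw [sub_neg_eq_add, Odd.neg_pow ⟨s, rfl⟩, sub_neg_eq_add] at h1
    exact h1
  have h2ringchar : ringChar F ≠ 2 := by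
    intro h
    have h1 := FiniteField.even_card_of_char_two (F := F) h
    rw [hcard] at h1
    have h3 : (2*s+1)^2 = 2*(2*s*s+2*s)+1 := by ring
    omega
  have h2 : (2 : F) ≠ 0 := Ring.two_ne_zero h2ringchar
  have hα0 : α ≠ 0 := by
    intro h; apply hd0; rw [← hα, h]; norm_num
  have hαK : α ∉ K := fun h => hdns ⟨α, h, by rw [← hα]; ring⟩
  have hdq : d ^ (2*s+1) = d := (hKiff d).mp hdK
  have hαq : α ^ (2*s+1) = -α := by
    have h1 : (α ^ (2*s+1)) ^ 2 = d := by
      rw [← pow_mul, mul_comm, pow_mul, hα, hdq]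
    have h2' : (α ^ (2*s+1) - α) * (α ^ (2*s+1) + α) = 0 := by
      linear_combination h1 - hα
    rcases mul_eq_zero.mp h2' with h3 | h3
    · exact absurd ((hKiff α).mpr (by linear_combination h3)) hαK
    · linear_combination h3
  have hKchar2 : ringChar K ≠ 2 := by
    intro h
    have h1 := FiniteField.even_card_of_char_two (F := K) h
    rw [hcardK] at h1; omega
  have hdsK : d ^ s = -1 := by
    set d' : K := ⟨d, hdK⟩ with hd'
    have hd'0 : d' ≠ 0 := by
      intro h
      apply hd0
      have := congrArg (fun y : K => (y : F)) h
      simpa [hd'] using this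
    have hcardK2 : Fintype.card K / 2 = s := by rw [hcardK]; omega
    rcases FiniteField.pow_dichotomy hKchar2 hd'0 with h | h
    · exfalso
      apply hdns
      obtain ⟨r, hr⟩ := (FiniteField.isSquare_iff hKchar2 hd'0).mpr h
      refine ⟨(r : F), r.2, ?_⟩
      have := congrArg (fun y : K => (y : F)) hr
      push_cast at this
      linear_combination -this
    · rw [hcardK2] at h
      have := congrArg (fun y : K => (y : F)) h
      push_cast at this
      exact this
  have hKpowN : ∀ c : F, c ∈ K → c ≠ 0 → c ^ (2*s*(s+1)) = 1 := by
    intro c hc hc0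
    have h1 : c ^ (2*s) * c = c := by rw [← pow_succ]; exact (hKiff c).mp hc
    have h2' : c ^ (2*s) = 1 := mul_right_cancel₀ hc0 (by rw [h1, one_mul])
    rw [show 2*s*(s+1) = (2*s)*(s+1) by ring, pow_mul, h2', one_pow]
  have hα2s2 : α ^ (2*s+1+1) = -d := by
    rw [pow_succ, hαq, ← hα]; ring
  have hαN : α ^ (2*s*(s+1)) = (-1:F) ^ (s+1) := by
    rw [show 2*s*(s+1) = (2*s+1+1)*s by ring, pow_mul, hα2s2, neg_pow, hdsK, pow_succ]
  have hsqiff : ∀ x : F, x ≠ 0 → (IsSquare x ↔ x ^ (2*s*(s+1)) = 1) := by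
    intro x hx
    have h1 := FiniteField.isSquare_iff h2ringchar hx
    rw [hcard, (by
      have : (2*s+1)^2 = 2*(2*s*(s+1))+1 := by ring
      omega : (2*s+1)^2/2 = 2*s*(s+1))] at h1
    exact h1
  have hsqrtQ : ∀ γ : F, γ ^ (s+1) = 1 → ∃ δ : F, δ ^ (2*s+1+1) = 1 ∧ δ ^ 2 = γ :=
    fun γ h => aux_sqrt s hcard h
  -- core computation
  have hkey : ∀ γ : F, γ ^ (2*s+1+1) = 1 → γ ≠ 1 →
      (α*(γ+1)/(γ-1)) ∈ K ∧ ψ (α*γ) = α*(γ+1)/(γ-1) ∧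
      (α*(γ+1)/(γ-1) - α) ≠ 0 ∧ (α*(γ+1)/(γ-1) - α) ^ (2*s*(s+1)) = γ ^ (s+1) := by
    intro γ hγ hγ1
    have hγ0 : γ ≠ 0 := by rintro rfl; rw [zero_pow (by omega)] at hγ; exact zero_ne_one hγ
    have hγ1' : γ - 1 ≠ 0 := sub_ne_zero.mpr hγ1
    have hγq : γ ^ (2*s+1) * γ = 1 := by rw [← pow_succ]; exact hγ
    set c : F := α*(γ+1)/(γ-1) with hc
    have e1 : c * (γ-1) = α * (γ+1) := div_mul_cancel₀ _ hγ1'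
    have h4 : c ^ (2*s+1) * (γ ^ (2*s+1) - 1) = -α * (γ ^ (2*s+1) + 1) := by
      have h5 : (c*(γ-1))^(2*s+1) = (α*(γ+1))^(2*s+1) := by rw [e1]
      simp only [mul_pow] at h5
      rw [frobsub γ 1, frobadd γ 1, one_pow, hαq] at h5
      linear_combination h5
    have h5' : c ^ (2*s+1) * (γ-1) = c * (γ-1) := by
      linear_combination (-γ) * h4 + (c ^ (2*s+1) + α) * hγq - e1
    have hcK : c ∈ K := (hKiff c).mpr (mul_right_cancel₀ hγ1' h5')
    have e6 : (c - α) * (γ - 1) = 2*α := by linear_combination e1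
    have hcα0 : c - α ≠ 0 := by
      intro h
      rw [h, zero_mul] at e6
      exact mul_ne_zero h2 hα0 e6.symm
    have hαγα : α * γ ≠ α := by
      intro h
      exact hγ1 (mul_left_cancel₀ hα0 (h.trans (mul_one α).symm))
    have hψv : ψ (α*γ) = c := by
      rw [hψ _ hαγα, hc, div_eq_div_iff (sub_ne_zero.mpr hαγα) hγ1']
      linear_combination (1 - γ) * hα
    have h7 : γ * ((γ-1) ^ (2*s+1)) = -(γ-1) := by
      rw [frobsub γ 1, one_pow]
      linear_combination hγq
    have key3 : γ ^ (s+1) * ((γ-1) ^ (2*s*(s+1)) * (γ-1) ^ (s+1))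
        = (-1:F) ^ (s+1) * (γ-1) ^ (s+1) := by
      have h8 : (γ * ((γ-1) ^ (2*s+1))) ^ (s+1) = (-(γ-1)) ^ (s+1) := by rw [h7]
      rw [mul_pow, ← pow_mul, neg_pow,
        show (2*s+1)*(s+1) = 2*s*(s+1)+(s+1) by ring, pow_add (γ-1) (2*s*(s+1)) (s+1)] at h8
      exact h8
    have key4 : γ ^ (s+1) * (γ-1) ^ (2*s*(s+1)) = (-1:F) ^ (s+1) := by
      apply mul_right_cancel₀ (pow_ne_zero (s+1) hγ1')
      rw [mul_assoc]; exact key3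
    have h9 : (c - α) ^ (2*s*(s+1)) * (γ-1) ^ (2*s*(s+1)) = (-1:F) ^ (s+1) := by
      have h10 : ((c-α)*(γ-1))^(2*s*(s+1)) = (2*α)^(2*s*(s+1)) := by rw [e6]
      simp only [mul_pow] at h10
      rw [hαN] at h10
      have h11 : (2:F) ^ (2*s*(s+1)) = 1 := by
        apply hKpowN 2 _ h2
        have := K.add_mem K.one_mem K.one_mem
        rwa [one_add_one_eq_two] at this
      rw [h11, one_mul] at h10
      exact h10
    have hfin : (c - α) ^ (2*s*(s+1)) = γ ^ (s+1) := by
      apply mul_right_cancel₀ (pow_ne_zero (2*s*(s+1)) hγ1')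
      rw [h9]
      exact key4.symm
    exact ⟨hcK, hψv, hcα0, hfin⟩
  have hQ0mem : ∀ γ : F, γ ∈ Q₀ ↔ ∃ δ : F, δ ^ (2*s+1+1) = 1 ∧ δ ^ 2 = γ := by
    intro γ
    rw [hQ₀, hQ]
    constructor
    · rintro ⟨δ, hδ, rfl⟩; exact ⟨δ, hδ, rfl⟩
    · rintro ⟨δ, hδ, rfl⟩; exact ⟨δ, hδ, rfl⟩
  have main : ψ '' ((fun x => α * x) '' Q₀) = {α} ∪ {x : F | x ∈ K ∧ IsSquare (x - α)} := by
    ext x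
    constructor
    · rintro ⟨y, ⟨γ, hγQ₀, rfl⟩, rfl⟩
      dsimp only
      obtain ⟨δ, hδ1, hδ2⟩ := (hQ0mem γ).mp hγQ₀
      by_cases hγ1 : γ = 1
      · rw [hγ1, mul_one, hψα]
        exact Or.inl rfl
      · have hγcirc : γ ^ (2*s+1+1) = 1 := by
          rw [← hδ2, ← pow_mul, show 2*(2*s+1+1) = (2*s+1+1)*2 by ring, pow_mul, hδ1, one_pow]
        obtain ⟨hcK, hψv, hcα0, hfin⟩ := hkey γ hγcirc hγ1
        refine Or.inr ⟨?_, ?_⟩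
        · rw [hψv]; exact hcK
        · rw [hψv, hsqiff _ hcα0, hfin, ← hδ2, ← pow_mul,
            show 2*(s+1) = 2*s+1+1 by ring, hδ1]
    · rintro (hx | ⟨hxK, hxsq⟩)
      · refine ⟨α * 1, ⟨1, (hQ0mem 1).mpr ⟨1, one_pow _, one_pow _⟩, rfl⟩, ?_⟩
        rw [mul_one, hψα, hx]
      · have hxα : x - α ≠ 0 := by
          intro h
          exact hαK (by rw [← sub_eq_zero.mp h]; exact hxK)
        have hxα' : x + α ≠ 0 := by
          intro h
          apply hαK
          have h1 : α = -x := by linear_combination h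
          rw [h1]; exact K.neg_mem hxK
        set γ : F := (x + α)/(x - α) with hγdef
        have e1 : γ * (x - α) = x + α := div_mul_cancel₀ _ hxα
        have hγ1 : γ ≠ 1 := by
          intro h
          rw [h, one_mul] at e1
          have h1 : (2:F) * α = 0 := by linear_combination -e1
          exact mul_ne_zero h2 hα0 h1
        have hxq : x ^ (2*s+1) = x := (hKiff x).mp hxK
        have e2 : γ ^ (2*s+1) * (x + α) = x - α := by
          have h5 : (γ*(x-α))^(2*s+1) = (x+α)^(2*s+1) := by rw [e1]
          simp only [mul_pow] at h5
          rw [frobsub x α, frobadd x α, hxq, hαq] at h5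
          linear_combination h5
        have hγq : γ ^ (2*s+1) * γ = 1 := by
          apply mul_right_cancel₀ hxα
          rw [one_mul, mul_assoc, e1, e2]
        have hγcirc : γ ^ (2*s+1+1) = 1 := by rw [pow_succ]; exact hγq
        obtain ⟨hcK, hψv, hcα0, hfin⟩ := hkey γ hγcirc hγ1
        have hcx : α*(γ+1)/(γ-1) = x := by
          rw [div_eq_iff (sub_ne_zero.mpr hγ1)]
          apply mul_right_cancel₀ hxα
          linear_combination (α - x) * e1
        rw [hcx] at hψv hcα0 hfin
        have hγs : γ ^ (s+1) = 1 := by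
          rw [← hfin]
          exact (hsqiff _ hcα0).mp hxsq
        obtain ⟨δ, hδ1, hδ2⟩ := hsqrtQ γ hγs
        exact ⟨α * γ, ⟨γ, (hQ0mem γ).mpr ⟨δ, hδ1, hδ2⟩, rfl⟩, hψv⟩
  have hψ0 : ψ 0 = -α := by
    rw [hψ 0 (Ne.symm hα0)]
    rw [div_eq_iff (by rw [zero_sub]; exact neg_ne_zero.mpr hα0)]
    linear_combination -hα
  refine ⟨fun _ => main, fun _ => ?_⟩
  rw [Set.image_union, main, Set.image_singleton, hψ0]
  ext y
  simp only [Set.mem_union, Set.mem_singleton_iff, Set.mem_insert_iff, Set.mem_setOf_eq]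
  tauto
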